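/- arXiv:1101.3898 — 2 statements merged into one kernel-verified Lean document; each statement's English description precedes it below -/
import Mathlib

section
/- Let A be an n×n Hermitian matrix with spectrum in an interval J containing 0, f : J → ℝ convex with f(0) ≤ 0, and Φ : M_n(ℂ) → M_m(ℂ) a positive linear map with 0 < Φ(I_n) ≤ I_m. Then for every x ∈ ℂᵐ with ‖x‖ ≤ 1, f(⟨Φ(A)x, x⟩) ≤ ⟨Φ(f(A))x, x⟩. -/
open Matrix ComplexOrder

noncomputable def matFun {n : ℕ} (f : ℝ → ℝ) (A : Matrix (Fin n) (Fin n) ℂ) :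
    Matrix (Fin n) (Fin n) ℂ :=
  if hA : A.IsHermitian then
    (hA.eigenvectorUnitary : Matrix (Fin n) (Fin n) ℂ) *
      Matrix.diagonal (fun i => (f (hA.eigenvalues i) : ℂ)) *
      (hA.eigenvectorUnitary : Matrix (Fin n) (Fin n) ℂ)ᴴ
  else 0

/-- `lam A j` : the `j`-th largest eigenvalue (0-indexed) of a Hermitian matrix `A`. -/
noncomputable def lam {n : ℕ} (A : Matrix (Fin n) (Fin n) ℂ) (j : ℕ) : ℝ :=
  if hA : A.IsHermitian then
    if h : j < n then (hA.eigenvalues ∘ Tuple.sort hA.eigenvalues) ((⟨j, h⟩ : Fin n).rev)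
    else 0
  else 0

/-- Loewner order. -/
def loewnerLE {n : ℕ} (A B : Matrix (Fin n) (Fin n) ℂ) : Prop := (B - A).PosSemidef

/-- `|B| = (B^* B)^{1/2}`. -/
noncomputable def matAbs {n : ℕ} (B : Matrix (Fin n) (Fin n) ℂ) : Matrix (Fin n) (Fin n) ℂ :=
  (Matrix.posSemidef_conjTranspose_mul_self B).1.eigenvectorUnitary.1 *
    Matrix.diagonal ((↑) ∘ (√·) ∘ (Matrix.posSemidef_conjTranspose_mul_self B).1.eigenvalues) *
    (star (Matrix.posSemidef_conjTranspose_mul_self B).1.eigenvectorUnitary : Matrix (Fin n) (Fin n) ℂ)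

/-- `|B|^r` via functional calculus. -/
noncomputable def matAbsPow {n : ℕ} (B : Matrix (Fin n) (Fin n) ℂ) (r : ℝ) :
    Matrix (Fin n) (Fin n) ℂ :=
  matFun (fun t => t ^ r) (matAbs B)

noncomputable def quadForm {m : ℕ} (x : Fin m → ℂ) : Matrix (Fin m) (Fin m) ℂ →ₗ[ℂ] ℂ where
  toFun M := star x ⬝ᵥ (M *ᵥ x)
  map_add' M N := by simp [Matrix.add_mulVec, dotProduct_add]
  map_smul' c M := by simp [Matrix.smul_mulVec, dotProduct_smul]

/-- Lemma 2 of the paper: for a positive linear map `Φ` with `0 < Φ(Iₙ) ≤ Iₘ`, a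
Hermitian `A` with spectrum in an interval `J ∋ 0` and `f` convex on `J` with
`f(0) ≤ 0`: `f(⟨Φ(A)x,x⟩) ≤ ⟨Φ(f(A))x,x⟩` for all `‖x‖ ≤ 1`. -/
theorem convex_positive_map_inner_le {n m : ℕ}
    (A : Matrix (Fin n) (Fin n) ℂ) (hA : A.IsHermitian)
    (J : Set ℝ) (h0 : (0 : ℝ) ∈ J) (f : ℝ → ℝ) (hf : ConvexOn ℝ J f) (hf0 : f 0 ≤ 0)
    (hspec : ∀ i, hA.eigenvalues i ∈ J)
    (Φ : Matrix (Fin n) (Fin n) ℂ →ₗ[ℂ] Matrix (Fin m) (Fin m) ℂ)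
    (hΦpos : ∀ B : Matrix (Fin n) (Fin n) ℂ, B.PosSemidef → (Φ B).PosSemidef)
    (hΦ1pos : (Φ 1).PosDef) (hΦ1le : loewnerLE (Φ 1) 1)
    (x : EuclideanSpace ℂ (Fin m)) (hx : ‖x‖ ≤ 1) :
    f ((star (x : Fin m → ℂ) ⬝ᵥ (Φ A *ᵥ (x : Fin m → ℂ))).re) ≤
      (star (x : Fin m → ℂ) ⬝ᵥ (Φ (matFun f A) *ᵥ (x : Fin m → ℂ))).re := by
  classical
  set xv : Fin m → ℂ := (x : Fin m → ℂ) with hxv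
  set U : Matrix (Fin n) (Fin n) ℂ := (hA.eigenvectorUnitary : Matrix (Fin n) (Fin n) ℂ) with hU
  set P : Fin n → Matrix (Fin n) (Fin n) ℂ :=
    fun i => U * Matrix.diagonal (Pi.single i (1 : ℂ)) * Uᴴ with hP
  set q : Matrix (Fin n) (Fin n) ℂ →ₗ[ℂ] ℂ := (quadForm xv).comp Φ with hq
  have hqdef : ∀ B, q B = star xv ⬝ᵥ (Φ B *ᵥ xv) := fun B => rfl
  -- diagonal decomposition
  have hdiagdec : ∀ d : Fin n → ℂ,
      Matrix.diagonal d = ∑ i, d i • Matrix.diagonal (Pi.single i (1 : ℂ)) := by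
    intro d; ext k l
    by_cases h : k = l <;> simp [Matrix.sum_apply, Matrix.diagonal_apply, Pi.single_apply, h]
  have hUdec : ∀ d : Fin n → ℂ, U * Matrix.diagonal d * Uᴴ = ∑ i, d i • P i := by
    intro d
    rw [hdiagdec d, Finset.mul_sum, Finset.sum_mul]
    refine Finset.sum_congr rfl fun i _ => ?_
    simp [hP, Matrix.mul_smul, Matrix.smul_mul]
  -- P i is psd
  have hPpsd : ∀ i, (P i).PosSemidef := by
    intro i
    refine Matrix.PosSemidef.mul_mul_conjTranspose_same
      (Matrix.posSemidef_diagonal_iff.mpr fun j => ?_) U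
    rcases eq_or_ne j i with h | h <;> simp [Pi.single_apply, h]
  -- positivity of real part of quadratic form
  have hre : ∀ M : Matrix (Fin m) (Fin m) ℂ, M.PosSemidef → 0 ≤ (star xv ⬝ᵥ (M *ᵥ xv)).re := by
    intro M hM
    have := hM.dotProduct_mulVec_nonneg xv
    exact (Complex.le_def.mp this).1
  set w : Fin n → ℝ := fun i => (q (P i)).re with hw
  have hwpos : ∀ i, 0 ≤ w i := fun i => hre _ (hΦpos _ (hPpsd i))
  -- sum of the P i is 1
  have hsumP : ∑ i, P i = 1 := by
    have h1 : (∑ i, (1 : ℂ) • P i) = U * Matrix.diagonal (fun _ => (1:ℂ)) * Uᴴ :=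
      (hUdec fun _ => 1).symm
    simp only [one_smul] at h1
    rw [h1, Matrix.diagonal_one, mul_one]
    simpa [hU, Matrix.star_eq_conjTranspose] using
      (Matrix.mem_unitaryGroup_iff.mp hA.eigenvectorUnitary.2)
  -- spectral decompositions
  have hAdec : A = ∑ i, (hA.eigenvalues i : ℂ) • P i := by
    conv_lhs => rw [hA.spectral_theorem]
    rw [← hUdec]
    rfl
  have hfAdec : matFun f A = ∑ i, (f (hA.eigenvalues i) : ℂ) • P i := by
    rw [matFun, dif_pos hA, ← hUdec]
  -- real parts of q A, q (matFun f A)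
  have hqA : (q A).re = ∑ i, hA.eigenvalues i * w i := by
    conv_lhs => rw [hAdec]
    rw [map_sum, Complex.re_sum]
    refine Finset.sum_congr rfl fun i _ => ?_
    rw [LinearMap.map_smul, smul_eq_mul, Complex.re_ofReal_mul]
  have hqfA : (q (matFun f A)).re = ∑ i, f (hA.eigenvalues i) * w i := by
    rw [hfAdec, map_sum, Complex.re_sum]
    refine Finset.sum_congr rfl fun i _ => ?_
    rw [LinearMap.map_smul, smul_eq_mul, Complex.re_ofReal_mul]
  -- sum of weights
  set s : ℝ := ∑ i, w i with hs
  have hnormsq : (star xv ⬝ᵥ xv).re = ‖x‖ ^ 2 := by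
    rw [EuclideanSpace.norm_eq, Real.sq_sqrt (by positivity)]
    rw [dotProduct, Complex.re_sum]
    refine Finset.sum_congr rfl fun i _ => ?_
    rw [Pi.star_apply, RCLike.star_def, mul_comm, Complex.mul_conj, Complex.ofReal_re,
      ← Complex.sq_norm]
  have hs1 : s ≤ 1 := by
    have hq1 : (q 1).re = s := by
      rw [hs, ← hsumP, map_sum, Complex.re_sum]
    have hsub := hre _ hΦ1le
    rw [Matrix.sub_mulVec, dotProduct_sub, Complex.sub_re, sub_nonneg, Matrix.one_mulVec] at hsub
    calc s = (q 1).re := hq1.symm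
      _ ≤ (star xv ⬝ᵥ xv).re := hsub
      _ = ‖x‖ ^ 2 := hnormsq
      _ ≤ 1 := by nlinarith [norm_nonneg x]
  -- Jensen
  set w' : Fin (n + 1) → ℝ := Fin.snoc w (1 - s) with hw'
  set p' : Fin (n + 1) → ℝ := Fin.snoc (fun i => hA.eigenvalues i) 0 with hp'
  have hw'pos : ∀ i ∈ Finset.univ, 0 ≤ w' i := by
    intro i _
    refine Fin.lastCases ?_ ?_ i
    · simp [hw', sub_nonneg, hs1]
    · intro j; simp [hw', hwpos j]
  have hw'sum : ∑ i, w' i = 1 := by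
    rw [Fin.sum_univ_castSucc]
    simp [hw', hs]
  have hmem : ∀ i ∈ Finset.univ, p' i ∈ J := by
    intro i _
    refine Fin.lastCases ?_ ?_ i
    · simpa [hp'] using h0
    · intro j; simpa [hp'] using hspec j
  have hjensen := hf.map_sum_le hw'pos hw'sum hmem
  have hsum1 : ∑ i, w' i • p' i = (q A).re := by
    rw [Fin.sum_univ_castSucc, hqA]
    simp [hw', hp', smul_eq_mul, mul_comm]
  have hsum2 : ∑ i, w' i • f (p' i) ≤ (q (matFun f A)).re := by
    rw [Fin.sum_univ_castSucc, hqfA]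
    have h1 : (1 - s) * f 0 ≤ 0 :=
      mul_nonpos_of_nonneg_of_nonpos (by linarith) hf0
    have : ∑ i : Fin n, w' i.castSucc • f (p' i.castSucc) = ∑ i, f (hA.eigenvalues i) * w i := by
      refine Finset.sum_congr rfl fun i _ => ?_
      simp [hw', hp', smul_eq_mul, mul_comm]
    rw [this]
    simp only [hw', hp', Fin.snoc_last, smul_eq_mul]
    linarith
  rw [hsum1] at hjensen
  calc f ((star xv ⬝ᵥ (Φ A *ᵥ xv)).re) = f ((q A).re) := rfl
    _ ≤ ∑ i, w' i • f (p' i) := hjensen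
    _ ≤ (q (matFun f A)).re := hsum2
end

section
/- Let A₁, …, A_ℓ be Hermitian n×n matrices and X₁, …, X_ℓ ∈ M_n(ℂ) with ∑_i α_i X_i* X_i ≤ I_n for some α_i > 0. Let f : ℝ → ℝ be convex with f(0) ≤ 0 and f(uv) ≤ f(u)f(v) for all u, v ∈ ℝ. Then for each 1 ≤ k ≤ n, ∑_{j=1}^k λ_j(f(∑_i X_i* A_i X_i)) ≤ ∑_{j=1}^k λ_j(∑_i α_i f(α_i⁻¹) X_i* f(A_i) X_i). -/
open Matrix ComplexOrder

namespace KyAux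


variable {n : ℕ}

/-- real quadratic form of `V * diagonal d * Vᴴ` at `v`. -/
noncomputable def qd (V : Matrix (Fin n) (Fin n) ℂ) (d : Fin n → ℝ) (v : Fin n → ℂ) : ℝ :=
  ∑ m, d m * Complex.normSq ((Vᴴ *ᵥ v) m)

lemma star_conjT_mulVec (V : Matrix (Fin n) (Fin n) ℂ) (v : Fin n → ℂ) :
    star (Vᴴ *ᵥ v) = star v ᵥ* V := by
  rw [star_mulVec, conjTranspose_conjTranspose]

lemma dot_eq_qd {H V : Matrix (Fin n) (Fin n) ℂ} {d : Fin n → ℝ}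
    (hdec : H = V * Matrix.diagonal (fun m => (d m : ℂ)) * Vᴴ) (v : Fin n → ℂ) :
    star v ⬝ᵥ (H *ᵥ v) = ((qd V d v : ℝ) : ℂ) := by
  subst hdec
  rw [← mulVec_mulVec, ← mulVec_mulVec, dotProduct_mulVec, ← star_conjT_mulVec]
  simp only [qd, dotProduct, mulVec_diagonal, Pi.star_apply, Complex.ofReal_sum]
  refine Finset.sum_congr rfl fun m _ => ?_
  rw [Complex.ofReal_mul, Complex.star_def, Complex.normSq_eq_conj_mul_self]
  ring

lemma qd_col_self {V : Matrix (Fin n) (Fin n) ℂ} (hV : Vᴴ * V = 1) (d : Fin n → ℝ) (c : Fin n) :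
    qd V d (fun t => V t c) = d c := by
  have hcol : (Vᴴ *ᵥ fun t => V t c) = fun m => (1 : Matrix (Fin n) (Fin n) ℂ) m c := by
    funext m
    rw [← hV, mul_apply, mulVec]
    rfl
  simp only [qd, hcol, one_apply]
  rw [Finset.sum_eq_single c]
  · simp
  · intro b _ hb; simp [if_neg hb]
  · simp




lemma inner_piLp_equiv_symm' (a b : Fin n → ℂ) :
    inner ℂ ((WithLp.equiv 2 (Fin n → ℂ)).symm a) ((WithLp.equiv 2 (Fin n → ℂ)).symm b)
      = star a ⬝ᵥ b := by
  show b ⬝ᵥ star a = _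
  exact dotProduct_comm _ _

/-- Bessel's inequality, concrete form. -/
lemma bessel {ι : Type} [Fintype ι] [DecidableEq ι] (x : ι → Fin n → ℂ)
    (hx : ∀ j j', star (x j) ⬝ᵥ x j' = if j = j' then 1 else 0)
    (u : Fin n → ℂ) (hu : star u ⬝ᵥ u = 1) :
    ∑ j, Complex.normSq (star u ⬝ᵥ x j) ≤ 1 := by
  classical
  set X : ι → EuclideanSpace ℂ (Fin n) := fun j => (WithLp.equiv 2 _).symm (x j) with hX
  have hXo : Orthonormal ℂ X := by
    rw [orthonormal_iff_ite]
    intro i j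
    rw [hX]
    rw [inner_piLp_equiv_symm']
    exact hx i j
  have hU := hXo.sum_inner_products_le (x := (WithLp.equiv 2 _).symm u) (s := Finset.univ)
  have hnorm : ‖(WithLp.equiv 2 (Fin n → ℂ)).symm u‖ ^ 2 = 1 := by
    have h1 := inner_self_eq_norm_sq (𝕜 := ℂ) ((WithLp.equiv 2 (Fin n → ℂ)).symm u)
    rw [inner_piLp_equiv_symm', hu] at h1
    simpa using h1.symm
  rw [hnorm] at hU
  refine le_trans (le_of_eq ?_) hU
  refine Finset.sum_congr rfl fun j _ => ?_
  rw [inner_piLp_equiv_symm']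
  have : star (x j) ⬝ᵥ u = (starRingEnd ℂ) (star u ⬝ᵥ x j) := by
    simp only [dotProduct, map_sum, Pi.star_apply, Complex.star_def]
    refine Finset.sum_congr rfl fun m _ => ?_
    rw [RingHom.map_mul, Complex.conj_conj]
    ring
  rw [this, Complex.norm_conj, Complex.sq_norm]

/-- A unitary preserves the sum of `normSq`. -/
lemma sum_normSq_conjT {V : Matrix (Fin n) (Fin n) ℂ} (hV : V * Vᴴ = 1) (z : Fin n → ℂ) :
    ∑ m, Complex.normSq ((Vᴴ *ᵥ z) m) = ∑ m, Complex.normSq (z m) := by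
  have h1 : ∀ w : Fin n → ℂ, star w ⬝ᵥ w = ((∑ m, Complex.normSq (w m) : ℝ) : ℂ) := by
    intro w
    simp only [dotProduct, Pi.star_apply, Complex.ofReal_sum, Complex.star_def]
    exact Finset.sum_congr rfl fun m _ => by
      rw [Complex.normSq_eq_conj_mul_self]
  have h2 : star (Vᴴ *ᵥ z) ⬝ᵥ (Vᴴ *ᵥ z) = star z ⬝ᵥ z := by
    rw [star_conjT_mulVec, ← dotProduct_mulVec, mulVec_mulVec, hV, one_mulVec]
  rw [h1, h1] at h2
  exact_mod_cast h2



def topSet (n k : ℕ) : Finset (Fin n) := Finset.univ.filter (fun m => n - k ≤ (m : ℕ))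

lemma sum_rev_eq {n k : ℕ} (hk1 : 1 ≤ k) (hkn : k ≤ n) (g : Fin n → ℝ) :
    ∑ j ∈ Finset.range k, (if h : j < n then g (Fin.rev ⟨j, h⟩) else 0)
      = ∑ m ∈ topSet n k, g m := by
  refine Finset.sum_bij' (fun j hj => Fin.rev ⟨j, (Finset.mem_range.mp hj).trans_le hkn⟩)
    (fun m _ => n - 1 - (m : ℕ)) ?_ ?_ ?_ ?_ ?_
  · intro j hj
    have hj' := Finset.mem_range.mp hj
    simp only [topSet, Finset.mem_filter, Finset.mem_univ, true_and, Fin.val_rev]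
    omega
  · intro m hm
    simp only [topSet, Finset.mem_filter, Finset.mem_univ, true_and] at hm
    have := m.isLt
    show n - 1 - (m : ℕ) ∈ Finset.range k
    exact Finset.mem_range.mpr (by omega)
  · intro j hj
    have hj' := Finset.mem_range.mp hj
    simp only [Fin.val_rev]
    omega
  · intro m hm
    simp only [topSet, Finset.mem_filter, Finset.mem_univ, true_and] at hm
    have := m.isLt
    apply Fin.ext
    show ((Fin.rev ⟨n - 1 - (m:ℕ), _⟩ : Fin n) : ℕ) = (m : ℕ)
    simp only [Fin.val_rev]
    omega
  · intro j hj
    have hj' : j < n := (Finset.mem_range.mp hj).trans_le hkn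
    rw [dif_pos hj']

lemma topSet_card {n k : ℕ} (hk1 : 1 ≤ k) (hkn : k ≤ n) : (topSet n k).card = k := by
  have h := sum_rev_eq hk1 hkn (fun _ => (1 : ℝ))
  rw [Finset.sum_const, nsmul_eq_mul, mul_one] at h
  have h2 : ∑ j ∈ Finset.range k, (if h : j < n then (1:ℝ) else 0) = k := by
    rw [Finset.sum_congr rfl fun j hj => dif_pos ((Finset.mem_range.mp hj).trans_le hkn)]
    simp
  rw [h2] at h
  exact_mod_cast h.symm

lemma sum_mul_le_top {n k : ℕ} (hk1 : 1 ≤ k) (hkn : k ≤ n) (e : Fin n → ℝ) (he : Monotone e)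
    (w : Fin n → ℝ) (hw0 : ∀ m, 0 ≤ w m) (hw1 : ∀ m, w m ≤ 1) (hsum : ∑ m, w m = k) :
    ∑ m, e m * w m ≤ ∑ m ∈ topSet n k, e m := by
  have hnk : n - k < n := by omega
  set t : ℝ := e ⟨n - k, hnk⟩ with ht
  have key : ∑ m, (e m - t) * w m ≤ ∑ m ∈ topSet n k, (e m - t) := by
    rw [← Finset.sum_filter_add_sum_filter_not Finset.univ (fun m : Fin n => n - k ≤ (m : ℕ))
      (fun m => (e m - t) * w m)]
    have h1 : ∑ m ∈ Finset.univ.filter (fun m : Fin n => n - k ≤ (m : ℕ)), (e m - t) * w m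
        ≤ ∑ m ∈ topSet n k, (e m - t) := by
      refine Finset.sum_le_sum fun m hm => ?_
      simp only [Finset.mem_filter, Finset.mem_univ, true_and] at hm
      have hem : t ≤ e m := he (by exact hm)
      nlinarith [hw0 m, hw1 m]
    have h2 : ∑ m ∈ Finset.univ.filter (fun m : Fin n => ¬ n - k ≤ (m : ℕ)), (e m - t) * w m
        ≤ 0 := by
      refine Finset.sum_nonpos fun m hm => ?_
      simp only [Finset.mem_filter, Finset.mem_univ, true_and, not_le] at hm
      have hem : e m ≤ t := he (le_of_lt (by exact hm))
      nlinarith [hw0 m]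
    linarith
  have hcard := topSet_card hk1 hkn (n := n)
  have expand1 : ∑ m, (e m - t) * w m = ∑ m, e m * w m - t * k := by
    rw [Finset.sum_congr rfl (fun m _ => by ring : ∀ m ∈ Finset.univ,
      (e m - t) * w m = e m * w m - t * w m), Finset.sum_sub_distrib, ← Finset.mul_sum, hsum]
  have expand2 : ∑ m ∈ topSet n k, (e m - t) = ∑ m ∈ topSet n k, e m - t * k := by
    rw [Finset.sum_sub_distrib, Finset.sum_const, hcard, nsmul_eq_mul]
    ring
  rw [expand1, expand2] at key
  linarith






lemma dot_self_normSq (z : Fin n → ℂ) :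
    star z ⬝ᵥ z = ((∑ m, Complex.normSq (z m) : ℝ) : ℂ) := by
  simp only [dotProduct, Pi.star_apply, Complex.ofReal_sum, Complex.star_def]
  exact Finset.sum_congr rfl fun m _ => by rw [Complex.normSq_eq_conj_mul_self]

lemma dot_cols (V : Matrix (Fin n) (Fin n) ℂ) (a b : Fin n) :
    star (fun t => V t a) ⬝ᵥ (fun t => V t b) = (Vᴴ * V) a b := by
  simp only [dotProduct, mul_apply, conjTranspose_apply, Pi.star_apply]

lemma cols_ortho {V : Matrix (Fin n) (Fin n) ℂ} (hV1 : Vᴴ * V = 1) {ι : Type}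
    [DecidableEq ι] (c : ι → Fin n) (hc : Function.Injective c) (j j' : ι) :
    star (fun t => V t (c j)) ⬝ᵥ (fun t => V t (c j')) = if j = j' then 1 else 0 := by
  rw [dot_cols, hV1, one_apply]
  simp [hc.eq_iff]

lemma qd_sum_le {k : ℕ} (hk1 : 1 ≤ k) (hkn : k ≤ n) {ι : Type} [Fintype ι] [DecidableEq ι]
    (hcard : Fintype.card ι = k) {V : Matrix (Fin n) (Fin n) ℂ}
    (hV1 : Vᴴ * V = 1) (hV2 : V * Vᴴ = 1) (d : Fin n → ℝ)
    (x : ι → Fin n → ℂ) (hx : ∀ j j', star (x j) ⬝ᵥ x j' = if j = j' then 1 else 0) :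
    ∑ j, qd V d (x j) ≤ ∑ m ∈ topSet n k, (d ∘ Tuple.sort d) m := by
  classical
  set w : Fin n → ℝ := fun m => ∑ j, Complex.normSq ((Vᴴ *ᵥ x j) m) with hw
  have hswap : ∑ j, qd V d (x j) = ∑ m, d m * w m := by
    unfold qd
    rw [Finset.sum_comm]
    exact Finset.sum_congr rfl fun m _ => by rw [hw, Finset.mul_sum]
  have hcol : ∀ (m : Fin n) (z : Fin n → ℂ), (Vᴴ *ᵥ z) m = star (fun t => V t m) ⬝ᵥ z := by
    intro m z
    simp only [mulVec, dotProduct, conjTranspose_apply, Pi.star_apply]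
  have hw0 : ∀ m, 0 ≤ w m := fun m => Finset.sum_nonneg fun j _ => Complex.normSq_nonneg _
  have hw1 : ∀ m, w m ≤ 1 := by
    intro m
    have hunit : star (fun t => V t m) ⬝ᵥ (fun t => V t m) = 1 := by
      rw [dot_cols, hV1, one_apply_eq]
    have := bessel x hx (fun t => V t m) hunit
    refine le_trans (le_of_eq ?_) this
    exact Finset.sum_congr rfl fun j _ => by rw [hcol]
  have hsum : ∑ m, w m = k := by
    rw [hw]
    rw [Finset.sum_comm]
    have h1 : ∀ j : ι, ∑ m, Complex.normSq ((Vᴴ *ᵥ x j) m) = 1 := by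
      intro j
      rw [sum_normSq_conjT hV2]
      have h2 := hx j j
      rw [if_pos rfl, dot_self_normSq] at h2
      exact_mod_cast h2
    rw [Finset.sum_congr rfl fun j _ => h1 j, Finset.sum_const]
    simp [Finset.card_univ, hcard]
  rw [hswap]
  have hre : ∑ m, d m * w m = ∑ m, (d ∘ Tuple.sort d) m * (w ∘ Tuple.sort d) m := by
    exact (Equiv.sum_comp (Tuple.sort d) (fun m => d m * w m)).symm
  rw [hre]
  refine sum_mul_le_top hk1 hkn (d ∘ Tuple.sort d) (Tuple.monotone_sort d)
    (w ∘ Tuple.sort d) (fun m => hw0 _) (fun m => hw1 _) ?_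
  simp only [Function.comp]
  rw [Equiv.sum_comp (Tuple.sort d) w, hsum]




/-- a Hermitian matrix's sorted top-k eigenvalue sum equals the `lam` sum. -/
lemma lamSum {k : ℕ} (hk1 : 1 ≤ k) (hkn : k ≤ n) {H : Matrix (Fin n) (Fin n) ℂ}
    (hH : H.IsHermitian) :
    ∑ j ∈ Finset.range k, lam H j
      = ∑ m ∈ topSet n k, (hH.eigenvalues ∘ Tuple.sort hH.eigenvalues) m := by
  rw [← sum_rev_eq hk1 hkn]
  refine Finset.sum_congr rfl fun j hj => ?_
  unfold lam
  rw [dif_pos hH]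

/-- spectral theorem in the `fun m => ((d m : ℝ) : ℂ)` shape. -/
lemma spectral' {H : Matrix (Fin n) (Fin n) ℂ} (hH : H.IsHermitian) :
    H = (hH.eigenvectorUnitary : Matrix (Fin n) (Fin n) ℂ) *
      Matrix.diagonal (fun m => ((hH.eigenvalues m : ℝ) : ℂ)) *
      (hH.eigenvectorUnitary : Matrix (Fin n) (Fin n) ℂ)ᴴ := by
  have h := hH.spectral_theorem
  rw [Unitary.conjStarAlgAut_apply, Matrix.star_eq_conjTranspose] at h
  exact h

lemma eigU_mul_self {H : Matrix (Fin n) (Fin n) ℂ} (hH : H.IsHermitian) :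
    (hH.eigenvectorUnitary : Matrix (Fin n) (Fin n) ℂ)ᴴ *
      (hH.eigenvectorUnitary : Matrix (Fin n) (Fin n) ℂ) = 1 := by
  rw [← Matrix.star_eq_conjTranspose]
  exact Matrix.mem_unitaryGroup_iff'.mp hH.eigenvectorUnitary.2

lemma eigU_mul_self' {H : Matrix (Fin n) (Fin n) ℂ} (hH : H.IsHermitian) :
    (hH.eigenvectorUnitary : Matrix (Fin n) (Fin n) ℂ) *
      (hH.eigenvectorUnitary : Matrix (Fin n) (Fin n) ℂ)ᴴ = 1 := by
  rw [← Matrix.star_eq_conjTranspose]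
  exact Matrix.mem_unitaryGroup_iff.mp hH.eigenvectorUnitary.2

/-- key transfer: if `H = V diag(d) Vᴴ` then `d c = qd W e (col_V c)` for any other
decomposition `H = W diag(e) Wᴴ`. -/
lemma eig_transfer {H V W : Matrix (Fin n) (Fin n) ℂ} {d e : Fin n → ℝ}
    (hdecV : H = V * Matrix.diagonal (fun m => (d m : ℂ)) * Vᴴ)
    (hdecW : H = W * Matrix.diagonal (fun m => (e m : ℂ)) * Wᴴ)
    (hV1 : Vᴴ * V = 1) (c : Fin n) :
    d c = qd W e (fun t => V t c) := by
  have h1 := dot_eq_qd hdecV (fun t => V t c)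
  have h2 := dot_eq_qd hdecW (fun t => V t c)
  rw [qd_col_self hV1] at h1
  rw [h1] at h2
  exact_mod_cast h2

/-- one-sided comparison of sorted top-k sums for two unitary diagonalizations. -/
lemma top_le_top {k : ℕ} (hk1 : 1 ≤ k) (hkn : k ≤ n) {H V W : Matrix (Fin n) (Fin n) ℂ}
    {d e : Fin n → ℝ}
    (hdecV : H = V * Matrix.diagonal (fun m => (d m : ℂ)) * Vᴴ)
    (hdecW : H = W * Matrix.diagonal (fun m => (e m : ℂ)) * Wᴴ)
    (hV1 : Vᴴ * V = 1) (hW1 : Wᴴ * W = 1) (hW2 : W * Wᴴ = 1) :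
    ∑ m ∈ topSet n k, (d ∘ Tuple.sort d) m ≤ ∑ m ∈ topSet n k, (e ∘ Tuple.sort e) m := by
  classical
  set ι := {m : Fin n // m ∈ topSet n k}
  have hcard : Fintype.card ι = k := by
    rw [Fintype.card_coe]
    exact topSet_card hk1 hkn
  set c : ι → Fin n := fun m => Tuple.sort d m.1 with hc
  have hcinj : Function.Injective c := by
    intro a b hab
    exact Subtype.ext ((Tuple.sort d).injective hab)
  have hLHS : ∑ m ∈ topSet n k, (d ∘ Tuple.sort d) m = ∑ j : ι, d (c j) := by
    rw [← Finset.sum_coe_sort (topSet n k) (fun m => (d ∘ Tuple.sort d) m)]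
    rfl
  rw [hLHS]
  have heq : ∀ j : ι, d (c j) = qd W e (fun t => V t (c j)) :=
    fun j => eig_transfer hdecV hdecW hV1 (c j)
  rw [Finset.sum_congr rfl fun j _ => heq j]
  exact qd_sum_le hk1 hkn hcard hW1 hW2 e (fun j => fun t => V t (c j))
    (cols_ortho hV1 c hcinj)

/-- the `lam`-sum of a Hermitian matrix equals the sorted top-k sum of `d` for ANY
unitary diagonalization `H = V diag(d) Vᴴ`. -/
lemma lamSum_eq_top {k : ℕ} (hk1 : 1 ≤ k) (hkn : k ≤ n) {H V : Matrix (Fin n) (Fin n) ℂ}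
    {d : Fin n → ℝ} (hH : H.IsHermitian)
    (hdecV : H = V * Matrix.diagonal (fun m => (d m : ℂ)) * Vᴴ)
    (hV1 : Vᴴ * V = 1) (hV2 : V * Vᴴ = 1) :
    ∑ j ∈ Finset.range k, lam H j = ∑ m ∈ topSet n k, (d ∘ Tuple.sort d) m := by
  rw [lamSum hk1 hkn hH]
  exact le_antisymm
    (top_le_top hk1 hkn (spectral' hH) hdecV (eigU_mul_self hH) hV1 hV2)
    (top_le_top hk1 hkn hdecV (spectral' hH) hV1 (eigU_mul_self hH) (eigU_mul_self' hH))

/-- Jensen-type step for sub-probability weights. -/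
lemma convex_step {f : ℝ → ℝ} (hf : ConvexOn ℝ Set.univ f) (hf0 : f 0 ≤ 0)
    {ι : Type} [Fintype ι] (q t : ι → ℝ) (hq : ∀ i, 0 ≤ q i) (hq1 : ∑ i, q i ≤ 1) :
    f (∑ i, q i * t i) ≤ ∑ i, q i * f (t i) := by
  classical
  set w : Option ι → ℝ := fun o => o.elim (1 - ∑ i, q i) q with hw
  set p : Option ι → ℝ := fun o => o.elim 0 t with hp
  have h0 : ∀ o ∈ (Finset.univ : Finset (Option ι)), 0 ≤ w o := by
    rintro (_ | i) _
    · simpa [hw] using hq1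
    · exact hq i
  have h1 : ∑ o, w o = 1 := by
    rw [Fintype.sum_option]
    simp [hw]
  have hmem : ∀ o ∈ (Finset.univ : Finset (Option ι)), p o ∈ Set.univ := by
    intro o _; trivial
  have hkey := hf.map_sum_le h0 h1 hmem
  rw [Fintype.sum_option, Fintype.sum_option] at hkey
  simp only [hw, hp, Option.elim, smul_eq_mul, mul_zero, zero_add] at hkey
  refine le_trans hkey ?_
  have : (1 - ∑ i, q i) * f 0 ≤ 0 :=
    mul_nonpos_of_nonneg_of_nonpos (by linarith) hf0
  linarith



lemma herm_of_dec {V : Matrix (Fin n) (Fin n) ℂ} (d : Fin n → ℝ) :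
    (V * Matrix.diagonal (fun m => (d m : ℂ)) * Vᴴ).IsHermitian := by
  have hd : (Matrix.diagonal (fun m => (d m : ℂ)))ᴴ = Matrix.diagonal (fun m => (d m : ℂ)) := by
    have hstar : star (fun m => ((d m : ℝ) : ℂ)) = fun m => ((d m : ℝ) : ℂ) := by
      funext m
      rw [Pi.star_apply, Complex.star_def, Complex.conj_ofReal]
    rw [Matrix.diagonal_conjTranspose, hstar]
  unfold Matrix.IsHermitian
  rw [Matrix.conjTranspose_mul, Matrix.conjTranspose_mul, Matrix.conjTranspose_conjTranspose,
    hd, mul_assoc]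

lemma matFun_eq {A : Matrix (Fin n) (Fin n) ℂ} (hA : A.IsHermitian) (f : ℝ → ℝ) :
    matFun f A = (hA.eigenvectorUnitary : Matrix (Fin n) (Fin n) ℂ) *
      Matrix.diagonal (fun m => ((f (hA.eigenvalues m) : ℝ) : ℂ)) *
      (hA.eigenvectorUnitary : Matrix (Fin n) (Fin n) ℂ)ᴴ := by
  unfold matFun
  rw [dif_pos hA]

lemma matFun_isHermitian {A : Matrix (Fin n) (Fin n) ℂ} (hA : A.IsHermitian) (f : ℝ → ℝ) :
    (matFun f A).IsHermitian := by
  rw [matFun_eq hA f]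
  exact herm_of_dec _

lemma conjCongr_isHermitian {A X : Matrix (Fin n) (Fin n) ℂ} (hA : A.IsHermitian) :
    (Xᴴ * A * X).IsHermitian := by
  unfold Matrix.IsHermitian
  rw [Matrix.conjTranspose_mul, Matrix.conjTranspose_mul, Matrix.conjTranspose_conjTranspose,
    hA.eq, mul_assoc]

lemma dot_congr (M X : Matrix (Fin n) (Fin n) ℂ) (x : Fin n → ℂ) :
    star x ⬝ᵥ ((Xᴴ * M * X) *ᵥ x) = star (X *ᵥ x) ⬝ᵥ (M *ᵥ (X *ᵥ x)) := by
  rw [← Matrix.mulVec_mulVec, ← Matrix.mulVec_mulVec, Matrix.dotProduct_mulVec (star x) Xᴴ,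
    ← Matrix.star_mulVec]

lemma dot_sum_mulVec {ι : Type*} (s : Finset ι) (M : ι → Matrix (Fin n) (Fin n) ℂ)
    (v w : Fin n → ℂ) :
    v ⬝ᵥ ((∑ i ∈ s, M i) *ᵥ w) = ∑ i ∈ s, v ⬝ᵥ (M i *ᵥ w) := by
  classical
  induction s using Finset.induction with
  | empty => simp
  | insert _ _ h ih =>
    rw [Finset.sum_insert h, Finset.sum_insert h, Matrix.add_mulVec, dotProduct_add, ih]

/-- Per-vector inequality. -/
lemma pervec {ℓ : ℕ} (A X : Fin ℓ → Matrix (Fin n) (Fin n) ℂ) (hA : ∀ i, (A i).IsHermitian)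
    (α : Fin ℓ → ℝ) (hα : ∀ i, 0 < α i)
    (hle : ((1 : Matrix (Fin n) (Fin n) ℂ) - ∑ i, (α i : ℂ) • ((X i)ᴴ * X i)).PosSemidef)
    (f : ℝ → ℝ) (hf : ConvexOn ℝ Set.univ f) (hf0 : f 0 ≤ 0)
    (hfmul : ∀ u v : ℝ, f (u * v) ≤ f u * f v)
    (x : Fin n → ℂ) (hx : star x ⬝ᵥ x = 1) (μ ν : ℝ)
    (hμ : star x ⬝ᵥ ((∑ i, (X i)ᴴ * A i * X i) *ᵥ x) = (μ : ℂ))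
    (hν : star x ⬝ᵥ
      ((∑ i, ((α i * f (α i)⁻¹ : ℝ) : ℂ) • ((X i)ᴴ * matFun f (A i) * X i)) *ᵥ x) = (ν : ℂ)) :
    f μ ≤ ν := by
  classical
  set c : Fin ℓ × Fin n → ℝ := fun p =>
    Complex.normSq (((((hA p.1).eigenvectorUnitary : Matrix (Fin n) (Fin n) ℂ))ᴴ *ᵥ
      (X p.1 *ᵥ x)) p.2) with hc
  set q : Fin ℓ × Fin n → ℝ := fun p => α p.1 * c p with hq
  set t : Fin ℓ × Fin n → ℝ := fun p => (α p.1)⁻¹ * (hA p.1).eigenvalues p.2 with ht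
  have hq0 : ∀ p, 0 ≤ q p := fun p =>
    mul_nonneg (le_of_lt (hα p.1)) (Complex.normSq_nonneg _)
  -- the inner quadratic forms
  have hinner : ∀ i, star x ⬝ᵥ (((X i)ᴴ * A i * X i) *ᵥ x)
      = ((∑ m, (hA i).eigenvalues m * c (i, m) : ℝ) : ℂ) := by
    intro i
    rw [dot_congr, dot_eq_qd (spectral' (hA i))]
    norm_cast
  have hinnerf : ∀ i, star x ⬝ᵥ (((X i)ᴴ * matFun f (A i) * X i) *ᵥ x)
      = ((∑ m, f ((hA i).eigenvalues m) * c (i, m) : ℝ) : ℂ) := by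
    intro i
    rw [dot_congr, dot_eq_qd (matFun_eq (hA i) f)]
    norm_cast
  -- identify μ
  have hμ2 : μ = ∑ p, q p * t p := by
    have h1 : star x ⬝ᵥ ((∑ i, (X i)ᴴ * A i * X i) *ᵥ x)
        = ((∑ i, ∑ m, (hA i).eigenvalues m * c (i, m) : ℝ) : ℂ) := by
      rw [dot_sum_mulVec, Complex.ofReal_sum]
      exact Finset.sum_congr rfl fun i _ => hinner i
    rw [hμ] at h1
    have h2 : μ = ∑ i, ∑ m, (hA i).eigenvalues m * c (i, m) := by exact_mod_cast h1
    rw [h2]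
    conv_rhs => rw [Fintype.sum_prod_type]
    refine Finset.sum_congr rfl fun i _ => Finset.sum_congr rfl fun m _ => ?_
    rw [hq, ht]
    field_simp
    rw [eq_div_iff (hα i).ne']
  -- weights sum to at most 1
  have hq1 : ∑ p, q p ≤ 1 := by
    have hXi : ∀ i, star x ⬝ᵥ (((X i)ᴴ * X i) *ᵥ x) = ((∑ m, c (i, m) : ℝ) : ℂ) := by
      intro i
      have h3 : (X i)ᴴ * X i = (X i)ᴴ * 1 * X i := by rw [mul_one]
      rw [h3, dot_congr, Matrix.one_mulVec, dot_self_normSq]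
      rw [show ∑ m, c (i, m) = ∑ m, Complex.normSq ((X i *ᵥ x) m) from
        sum_normSq_conjT (eigU_mul_self' (hA i)) (X i *ᵥ x)]
    have hMx : star x ⬝ᵥ ((∑ i, (α i : ℂ) • ((X i)ᴴ * X i)) *ᵥ x)
        = ((∑ p, q p : ℝ) : ℂ) := by
      rw [dot_sum_mulVec]
      have h4 : ∀ i, star x ⬝ᵥ (((α i : ℂ) • ((X i)ᴴ * X i)) *ᵥ x)
          = ((α i * ∑ m, c (i, m) : ℝ) : ℂ) := by
        intro i
        rw [Matrix.smul_mulVec, dotProduct_smul, hXi i, smul_eq_mul]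
        push_cast
        ring
      rw [Finset.sum_congr rfl fun i _ => h4 i, ← Complex.ofReal_sum]
      congr 1
      conv_rhs => rw [Fintype.sum_prod_type]
      exact Finset.sum_congr rfl fun i _ => by rw [Finset.mul_sum]
    have hpos := hle.dotProduct_mulVec_nonneg x
    rw [Matrix.sub_mulVec, Matrix.one_mulVec, dotProduct_sub, hx, hMx] at hpos
    have : ((1 - ∑ p, q p : ℝ) : ℂ) = 1 - ((∑ p, q p : ℝ) : ℂ) := by push_cast; ring
    rw [← this] at hpos
    have := Complex.zero_le_real.mp hpos
    linarith
  -- identify ν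
  have hν2 : ν = ∑ p, q p * (f ((α p.1)⁻¹) * f ((hA p.1).eigenvalues p.2)) := by
    have h1 : star x ⬝ᵥ
        ((∑ i, ((α i * f (α i)⁻¹ : ℝ) : ℂ) • ((X i)ᴴ * matFun f (A i) * X i)) *ᵥ x)
        = ((∑ i, (α i * f (α i)⁻¹) * ∑ m, f ((hA i).eigenvalues m) * c (i, m) : ℝ) : ℂ) := by
      rw [dot_sum_mulVec, Complex.ofReal_sum]
      refine Finset.sum_congr rfl fun i _ => ?_
      rw [Matrix.smul_mulVec, dotProduct_smul, hinnerf i, smul_eq_mul]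
      push_cast
      ring
    rw [hν] at h1
    have h2 : ν = ∑ i, (α i * f (α i)⁻¹) * ∑ m, f ((hA i).eigenvalues m) * c (i, m) := by
      exact_mod_cast h1
    rw [h2]
    conv_rhs => rw [Fintype.sum_prod_type]
    refine Finset.sum_congr rfl fun i _ => ?_
    rw [Finset.mul_sum]
    refine Finset.sum_congr rfl fun m _ => ?_
    rw [hq]
    ring
  -- conclude
  rw [hμ2, hν2]
  refine le_trans (convex_step hf hf0 q t hq0 hq1) (Finset.sum_le_sum fun p _ => ?_)
  refine mul_le_mul_of_nonneg_left ?_ (hq0 p)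
  rw [ht]
  exact hfmul _ _


end KyAux

/-- **Corollary (generalization of Kittaneh–Manasrah).** If `∑ αᵢ Xᵢ* Xᵢ ≤ Iₙ` with
`αᵢ > 0`, `Aᵢ` Hermitian, and `f : ℝ → ℝ` is convex with `f(0) ≤ 0` and
`f(uv) ≤ f(u)f(v)`, then for `1 ≤ k ≤ n`:
`∑_{j=1}^k λⱼ(f(∑ Xᵢ* Aᵢ Xᵢ)) ≤ ∑_{j=1}^k λⱼ(∑ αᵢ f(αᵢ⁻¹) Xᵢ* f(Aᵢ) Xᵢ)`. -/
theorem eigenvalue_sum_convex_congruence {n ℓ : ℕ}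
    (A X : Fin ℓ → Matrix (Fin n) (Fin n) ℂ) (hA : ∀ i, (A i).IsHermitian)
    (α : Fin ℓ → ℝ) (hα : ∀ i, 0 < α i)
    (hle : loewnerLE (∑ i, (α i : ℂ) • ((X i)ᴴ * X i)) 1)
    (f : ℝ → ℝ) (hf : ConvexOn ℝ Set.univ f) (hf0 : f 0 ≤ 0)
    (hfmul : ∀ u v : ℝ, f (u * v) ≤ f u * f v)
    (k : ℕ) (hk1 : 1 ≤ k) (hkn : k ≤ n) :
    ∑ j ∈ Finset.range k, lam (matFun f (∑ i, (X i)ᴴ * A i * X i)) j ≤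
      ∑ j ∈ Finset.range k,
        lam (∑ i, ((α i * f (α i)⁻¹ : ℝ) : ℂ) • ((X i)ᴴ * matFun f (A i) * X i)) j := by
  classical
  have hT : (∑ i, (X i)ᴴ * A i * X i).IsHermitian := by
    unfold Matrix.IsHermitian
    rw [Matrix.conjTranspose_sum]
    exact Finset.sum_congr rfl fun i _ => (KyAux.conjCongr_isHermitian (hA i)).eq
  have hS : (∑ i, ((α i * f (α i)⁻¹ : ℝ) : ℂ) • ((X i)ᴴ * matFun f (A i) * X i)).IsHermitian := by
    unfold Matrix.IsHermitian
    rw [Matrix.conjTranspose_sum]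
    refine Finset.sum_congr rfl fun i _ => ?_
    rw [Matrix.conjTranspose_smul,
      (KyAux.conjCongr_isHermitian (KyAux.matFun_isHermitian (hA i) f)).eq]
    congr 1
    rw [Complex.star_def, Complex.conj_ofReal]
  have hUT1 := KyAux.eigU_mul_self hT
  have hUT2 := KyAux.eigU_mul_self' hT
  set g : Fin n → ℝ := fun m => f (hT.eigenvalues m) with hg
  have hMF : matFun f (∑ i, (X i)ᴴ * A i * X i)
      = (hT.eigenvectorUnitary : Matrix (Fin n) (Fin n) ℂ) *
        Matrix.diagonal (fun m => ((g m : ℝ) : ℂ)) *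
        (hT.eigenvectorUnitary : Matrix (Fin n) (Fin n) ℂ)ᴴ := KyAux.matFun_eq hT f
  have hMFh := KyAux.matFun_isHermitian hT f
  rw [KyAux.lamSum_eq_top hk1 hkn hMFh hMF hUT1 hUT2, KyAux.lamSum hk1 hkn hS]
  set ι := {m : Fin n // m ∈ KyAux.topSet n k}
  have hcard : Fintype.card ι = k := by
    rw [Fintype.card_coe]
    exact KyAux.topSet_card hk1 hkn
  set cfun : ι → Fin n := fun m => Tuple.sort g m.1 with hcfun
  have hcinj : Function.Injective cfun := by
    intro a b hab
    exact Subtype.ext ((Tuple.sort g).injective hab)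
  set u : ι → (Fin n → ℂ) :=
    fun j => fun t => (hT.eigenvectorUnitary : Matrix (Fin n) (Fin n) ℂ) t (cfun j) with hu
  have hortho := KyAux.cols_ortho hUT1 cfun hcinj
  have hLHS : ∑ m ∈ KyAux.topSet n k, (g ∘ Tuple.sort g) m = ∑ j : ι, g (cfun j) := by
    rw [← Finset.sum_coe_sort (KyAux.topSet n k) (fun m => (g ∘ Tuple.sort g) m)]
    rfl
  rw [hLHS]
  have step : ∀ j : ι, g (cfun j) ≤
      KyAux.qd (hS.eigenvectorUnitary : Matrix (Fin n) (Fin n) ℂ) hS.eigenvalues (u j) := by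
    intro j
    refine KyAux.pervec A X hA α hα hle f hf hf0 hfmul (u j) ?_ (hT.eigenvalues (cfun j)) _ ?_ ?_
    · have h := hortho j j
      rw [if_pos rfl] at h
      exact h
    · rw [KyAux.dot_eq_qd (KyAux.spectral' hT), KyAux.qd_col_self hUT1]
    · rw [KyAux.dot_eq_qd (KyAux.spectral' hS)]
  refine le_trans (Finset.sum_le_sum fun j _ => step j) ?_
  exact KyAux.qd_sum_le hk1 hkn hcard (KyAux.eigU_mul_self hS) (KyAux.eigU_mul_self' hS)
    hS.eigenvalues u hortho
end
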